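/- For every nonzero real number λ and every complex number z with Re z > 0, the integral ∫₀^∞ (−(sgn(λ)/2)·erfc(|λ|·√t))·t^{z−1} dt converges and equals −(Γ(z+1/2)/(2z·√π))·sgn(λ)·|λ|^{−2z}. -/

import Mathlib

open MeasureTheory Real Set Filter

/-- The complementary error function `erfc(x) = (2/√π) ∫_x^∞ exp(−ξ²) dξ`. -/
noncomputable def erfc (x : ℝ) : ℝ :=
  (2 / Real.sqrt π) * ∫ ξ in Ioi x, Real.exp (-ξ ^ 2)


noncomputable def E (x : ℝ) : ℝ := ∫ ξ in Ioi x, Real.exp (-ξ ^ 2)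

lemma gauss_integrable : Integrable (fun ξ : ℝ => Real.exp (-ξ ^ 2)) := by
  simpa using integrable_exp_neg_mul_sq (one_pos)

lemma E_eq (x : ℝ) : E x = E 0 - ∫ ξ in (0:ℝ)..x, Real.exp (-ξ ^ 2) := by
  unfold E
  rcases le_total 0 x with h | h
  · rw [intervalIntegral.integral_of_le h, eq_sub_iff_add_eq, add_comm,
      ← setIntegral_union (Set.Ioc_disjoint_Ioi le_rfl) measurableSet_Ioi
        gauss_integrable.integrableOn gauss_integrable.integrableOn,
      Set.Ioc_union_Ioi_eq_Ioi h]
  · rw [intervalIntegral.integral_symm, intervalIntegral.integral_of_le h, sub_neg_eq_add,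
      add_comm, ← setIntegral_union (Set.Ioc_disjoint_Ioi le_rfl) measurableSet_Ioi
        gauss_integrable.integrableOn gauss_integrable.integrableOn,
      Set.Ioc_union_Ioi_eq_Ioi h]

lemma E_hasDerivAt (y : ℝ) : HasDerivAt E (-Real.exp (-y ^ 2)) y := by
  have : ∀ x, E x = E 0 - ∫ ξ in (0:ℝ)..x, Real.exp (-ξ ^ 2) := E_eq
  rw [funext this]
  have h := intervalIntegral.integral_hasDerivAt_right
    (gauss_integrable.intervalIntegrable (a := 0) (b := y))
    ((Continuous.stronglyMeasurable (by fun_prop)).stronglyMeasurableAtFilter)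
    (by fun_prop : Continuous fun ξ : ℝ => Real.exp (-ξ ^ 2)).continuousAt
  simpa using h.const_sub (E 0)

lemma erfc_eq (x : ℝ) : erfc x = (2 / Real.sqrt π) * E x := rfl

lemma E_nonneg (x : ℝ) : 0 ≤ E x :=
  setIntegral_nonneg measurableSet_Ioi fun ξ _ => (Real.exp_pos _).le

lemma E_translate (x : ℝ) :
    (∫ ξ in Ioi x, Real.exp (-(ξ - x) ^ 2)) = ∫ u in Ioi 0, Real.exp (-u ^ 2) := by
  rw [← integral_indicator measurableSet_Ioi, ← integral_indicator measurableSet_Ioi,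
    ← integral_add_right_eq_self (fun ξ => (Ioi x).indicator (fun ξ => Real.exp (-(ξ - x) ^ 2)) ξ) x]
  congr 1 with u
  by_cases hu : u ∈ Ioi (0:ℝ)
  · rw [Set.indicator_of_mem hu, Set.indicator_of_mem (by simpa using hu)]
    simp
  · rw [Set.indicator_of_notMem hu, Set.indicator_of_notMem (by simpa using hu)]

lemma E_le {x : ℝ} (hx : 0 ≤ x) : E x ≤ Real.exp (-x ^ 2) * (Real.sqrt π / 2) := by
  have h1 : E x ≤ ∫ ξ in Ioi x, Real.exp (-x ^ 2) * Real.exp (-(ξ - x) ^ 2) := by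
    apply setIntegral_mono_on gauss_integrable.integrableOn
    · apply Integrable.integrableOn
      apply Integrable.const_mul
      have : Integrable (fun ξ : ℝ => Real.exp (-(ξ - x) ^ 2)) := by
        simpa using gauss_integrable.comp_sub_right x
      exact this
    · exact measurableSet_Ioi
    · intro ξ hξ
      rw [← Real.exp_add]
      apply Real.exp_le_exp.mpr
      have : x ≤ ξ := le_of_lt hξ
      nlinarith
  rw [integral_const_mul, E_translate] at h1
  have h2 : (∫ u in Ioi (0:ℝ), Real.exp (-u ^ 2)) = Real.sqrt π / 2 := by
    simpa using integral_gaussian_Ioi 1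
  rw [h2] at h1
  exact h1

lemma erfc_nonneg (x : ℝ) : 0 ≤ erfc x := by
  rw [erfc_eq]
  have h := Real.sqrt_pos.mpr Real.pi_pos
  have h2 := E_nonneg x
  positivity

lemma erfc_le {x : ℝ} (hx : 0 ≤ x) : erfc x ≤ Real.exp (-x ^ 2) := by
  rw [erfc_eq]
  have hπ := Real.sqrt_pos.mpr Real.pi_pos
  have := E_le hx
  calc (2 / Real.sqrt π) * E x ≤ (2 / Real.sqrt π) * (Real.exp (-x ^ 2) * (Real.sqrt π / 2)) := by
        apply mul_le_mul_of_nonneg_left this (by positivity)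
    _ = Real.exp (-x ^ 2) := by field_simp

lemma erfc_continuous : Continuous erfc := by
  have : Continuous E := by
    apply continuous_iff_continuousAt.mpr
    exact fun x => (E_hasDerivAt x).continuousAt
  have h2 : Continuous fun x : ℝ => (2 / Real.sqrt π) * E x := continuous_const.mul this
  simpa [funext erfc_eq] using h2

lemma erfc_hasDerivAt {a t : ℝ} (ht : 0 < t) :
    HasDerivAt (fun t => erfc (a * Real.sqrt t))
      (-(a / Real.sqrt π) * Real.exp (-(a ^ 2 * t)) / Real.sqrt t) t := by
  have h1 : HasDerivAt (fun t : ℝ => a * Real.sqrt t) (a * (1 / (2 * Real.sqrt t))) t :=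
    (Real.hasDerivAt_sqrt ht.ne').const_mul a
  have h2 := (E_hasDerivAt (a * Real.sqrt t)).comp t h1
  have h3 := h2.const_mul (2 / Real.sqrt π)
  have h4 : HasDerivAt (fun t : ℝ => erfc (a * Real.sqrt t))
      (2 / Real.sqrt π * (-Real.exp (-(a * Real.sqrt t) ^ 2) * (a * (1 / (2 * Real.sqrt t))))) t := by
    simpa [Function.comp, ← erfc_eq] using h3
  convert h4 using 1
  have hs : Real.sqrt t > 0 := Real.sqrt_pos.mpr ht
  have hsq : (a * Real.sqrt t) ^ 2 = a ^ 2 * t := by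
    rw [mul_pow, Real.sq_sqrt ht.le]
  have hπ := Real.sqrt_pos.mpr Real.pi_pos
  rw [hsq]
  field_simp

lemma I_w {a : ℝ} (ha : 0 < a) {w : ℂ} (hw : 0 < w.re) :
    IntegrableOn (fun t : ℝ => (t : ℂ) ^ (w - 1) * Complex.exp (-((a ^ 2 * t : ℝ) : ℂ)))
      (Ioi 0) := by
  have hr : (0:ℝ) < a ^ 2 := by positivity
  have hconv := Complex.GammaIntegral_convergent hw
  have hcomp : IntegrableOn
      (fun t : ℝ => Complex.exp (-((a ^ 2 * t : ℝ) : ℂ)) * ((a ^ 2 * t : ℝ) : ℂ) ^ (w - 1))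
      (Ioi 0) := by
    have := (integrableOn_Ioi_comp_mul_left_iff
      (fun x : ℝ => Complex.exp (-(x : ℂ)) * (x : ℂ) ^ (w - 1)) 0 hr).mpr
      (by simpa using hconv)
    simpa using this
  have hc : ((a ^ 2 : ℝ) : ℂ) ^ (w - 1) ≠ 0 := by
    rw [Ne, Complex.cpow_eq_zero_iff]
    push_neg
    intro h
    exact absurd (by exact_mod_cast h) hr.ne'
  refine IntegrableOn.congr_fun (hcomp.const_mul (((a ^ 2 : ℝ) : ℂ) ^ (w - 1))⁻¹)
    (fun t ht => ?_) measurableSet_Ioi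
  have ht' : (0:ℝ) < t := ht
  rw [show ((a ^ 2 * t : ℝ) : ℂ) = ((a ^ 2 : ℝ) : ℂ) * ((t : ℝ) : ℂ) by push_cast; ring,
    Complex.mul_cpow_ofReal_nonneg hr.le ht'.le]
  linear_combination (Complex.exp (-(((a ^ 2 : ℝ) : ℂ) * (t : ℂ))) * (t : ℂ) ^ (w - 1)) *
    inv_mul_cancel₀ hc

lemma norm_ofReal_cpow {t : ℝ} (ht : 0 < t) (w : ℂ) : ‖(t : ℂ) ^ w‖ = t ^ w.re := by
  rw [Complex.norm_cpow_eq_rpow_re_of_pos ht]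

lemma I1 {a : ℝ} (ha : 0 < a) {z : ℂ} (hz : 0 < z.re) :
    IntegrableOn (fun t : ℝ => ((erfc (a * Real.sqrt t) : ℝ) : ℂ) * (t : ℂ) ^ (z - 1))
      (Ioi 0) := by
  refine Integrable.mono (I_w ha hz) ?_ ?_
  · refine ContinuousOn.aestronglyMeasurable (ContinuousOn.mul ?_ ?_) measurableSet_Ioi
    · exact (Complex.continuous_ofReal.comp
        (erfc_continuous.comp (continuous_const.mul Real.continuous_sqrt))).continuousOn
    · intro t ht
      exact (Complex.continuousAt_ofReal_cpow_const t (z - 1) (Or.inr (ne_of_gt ht))).continuousWithinAt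
  · rw [ae_restrict_iff' measurableSet_Ioi]
    filter_upwards with t ht
    have ht' : (0:ℝ) < t := ht
    have hsq : (a * Real.sqrt t) ^ 2 = a ^ 2 * t := by rw [mul_pow, Real.sq_sqrt ht'.le]
    have h1 : 0 ≤ a * Real.sqrt t := by positivity
    rw [norm_mul, norm_mul, Complex.norm_real, Real.norm_eq_abs,
      abs_of_nonneg (erfc_nonneg _)]
    have h2 : ‖Complex.exp (-((a ^ 2 * t : ℝ) : ℂ))‖ = Real.exp (-(a ^ 2 * t)) := by
      rw [Complex.norm_exp, Complex.neg_re, Complex.ofReal_re]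
    rw [h2, mul_comm (‖(t : ℂ) ^ (z - 1)‖)]
    apply mul_le_mul_of_nonneg_right _ (norm_nonneg _)
    calc erfc (a * Real.sqrt t) ≤ Real.exp (-(a * Real.sqrt t) ^ 2) := erfc_le h1
      _ = Real.exp (-(a ^ 2 * t)) := by rw [hsq]

lemma erfc_le_one {x : ℝ} (hx : 0 ≤ x) : erfc x ≤ 1 := by
  calc erfc x ≤ Real.exp (-x ^ 2) := erfc_le hx
    _ ≤ 1 := Real.exp_le_one_iff.mpr (neg_nonpos.mpr (by positivity))

lemma key_integral {a : ℝ} (ha : 0 < a) {z : ℂ} (hz : 0 < z.re) :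
    ∫ t in Ioi (0:ℝ), ((erfc (a * Real.sqrt t) : ℝ) : ℂ) * (t : ℂ) ^ (z - 1)
      = (((a / Real.sqrt π : ℝ)) : ℂ) / z *
        ∫ t in Ioi (0:ℝ), (t : ℂ) ^ (z + 1/2 - 1) * Complex.exp (-((a ^ 2 * t : ℝ) : ℂ)) := by
  have hz0 : z ≠ 0 := fun h => by rw [h] at hz; simp at hz
  have hw' : 0 < (z + 1/2).re := by simp [Complex.add_re]; linarith
  set F : ℝ → ℂ := fun t => ((erfc (a * Real.sqrt t) : ℝ) : ℂ) * ((t : ℂ) ^ z / z) with hF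
  set c : ℂ := ((-(a / Real.sqrt π) : ℝ) : ℂ) / z with hc
  set G : ℝ → ℂ := fun t => (t : ℂ) ^ (z + 1/2 - 1) * Complex.exp (-((a ^ 2 * t : ℝ) : ℂ))
    with hG
  set F'1 : ℝ → ℂ := fun t =>
    ((-(a / Real.sqrt π) * Real.exp (-(a ^ 2 * t)) / Real.sqrt t : ℝ) : ℂ) * ((t : ℂ) ^ z / z)
    with hF'1
  set F'2 : ℝ → ℂ := fun t => ((erfc (a * Real.sqrt t) : ℝ) : ℂ) * (t : ℂ) ^ (z - 1) with hF'2
  -- F'1 agrees with c • G on Ioi 0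
  have hF1G : ∀ t ∈ Ioi (0:ℝ), F'1 t = c * G t := by
    intro t ht
    have ht' : (0:ℝ) < t := ht
    have hsqrt : ((Real.sqrt t : ℝ) : ℂ) = (t : ℂ) ^ (1/2 : ℂ) := by
      rw [Real.sqrt_eq_rpow, Complex.ofReal_cpow ht'.le]
      norm_num
    have hts : (t : ℂ) ≠ 0 := Complex.ofReal_ne_zero.mpr ht'.ne'
    have hpow : (t : ℂ) ^ (z + 1/2 - 1) = (t : ℂ) ^ z / (t : ℂ) ^ (1/2 : ℂ) := by
      rw [← Complex.cpow_sub _ _ hts]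
      congr 1
      ring
    simp only [hF'1, hG, hc]
    rw [hpow, ← hsqrt]
    push_cast
    have hsne : ((Real.sqrt t : ℝ) : ℂ) ≠ 0 :=
      Complex.ofReal_ne_zero.mpr (Real.sqrt_pos.mpr ht').ne'
    field_simp
  have hIG : IntegrableOn G (Ioi 0) := I_w ha hw'
  have hIF'1 : IntegrableOn F'1 (Ioi 0) :=
    IntegrableOn.congr_fun (hIG.const_mul c) (fun t ht => (hF1G t ht).symm) measurableSet_Ioi
  have hIF'2 : IntegrableOn F'2 (Ioi 0) := I1 ha hz
  -- derivative
  have hderiv : ∀ t ∈ Ioi (0:ℝ), HasDerivAt F (F'1 t + F'2 t) t := by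
    intro t ht
    have ht' : (0:ℝ) < t := ht
    have d1 : HasDerivAt (fun t : ℝ => ((erfc (a * Real.sqrt t) : ℝ) : ℂ))
        ((-(a / Real.sqrt π) * Real.exp (-(a ^ 2 * t)) / Real.sqrt t : ℝ) : ℂ) t :=
      (erfc_hasDerivAt ht').ofReal_comp
    have hr : z - 1 ≠ -1 := by
      intro h
      rw [sub_eq_iff_eq_add] at h
      simp at h
      exact hz0 h
    have d2 : HasDerivAt (fun t : ℝ => (t : ℂ) ^ z / z) ((t : ℂ) ^ (z - 1)) t := by
      have := hasDerivAt_ofReal_cpow_const' ht'.ne' hr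
      simpa [sub_add_cancel] using this
    have hd := d1.mul d2
    have heq : ((-(a / Real.sqrt π) * Real.exp (-(a ^ 2 * t)) / Real.sqrt t : ℝ) : ℂ)
          * ((t : ℂ) ^ z / z) + ((erfc (a * Real.sqrt t) : ℝ) : ℂ) * (t : ℂ) ^ (z - 1)
        = F'1 t + F'2 t := rfl
    rw [← heq]
    exact hd
  -- continuity at 0
  have hF0 : F 0 = 0 := by
    rw [hF]
    simp [Complex.zero_cpow hz0]
  have hcont : ContinuousWithinAt F (Ici 0) 0 := by
    rw [ContinuousWithinAt, hF0]
    apply squeeze_zero_norm' (a := fun t => t ^ z.re * ‖z‖⁻¹)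
    · filter_upwards [eventually_mem_nhdsWithin] with t (ht : t ∈ Ici (0:ℝ))
      rcases eq_or_lt_of_le (Set.mem_Ici.mp ht) with h | h
      · simp [hF, ← h, Complex.zero_cpow hz0, Real.zero_rpow hz.ne']
      · have hb : 0 ≤ a * Real.sqrt t := by positivity
        rw [hF, norm_mul, norm_div, Complex.norm_real, Real.norm_eq_abs,
          abs_of_nonneg (erfc_nonneg _), norm_ofReal_cpow h]
        calc erfc (a * Real.sqrt t) * (t ^ z.re / ‖z‖)
            ≤ 1 * (t ^ z.re / ‖z‖) := by
              apply mul_le_mul_of_nonneg_right (erfc_le_one hb)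
              positivity
          _ = t ^ z.re * ‖z‖⁻¹ := by rw [one_mul, div_eq_mul_inv]
    · have h1 : Tendsto (fun t : ℝ => t ^ z.re) (nhdsWithin 0 (Ici 0)) (nhds 0) := by
        have := (Real.continuousAt_rpow_const 0 z.re (Or.inr hz.le)).continuousWithinAt
          (s := Ici 0)
        rwa [ContinuousWithinAt, Real.zero_rpow hz.ne'] at this
      simpa using h1.mul_const ‖z‖⁻¹
  -- limit at infinity
  have htop : Tendsto F atTop (nhds 0) := by
    apply squeeze_zero_norm' (a := fun t => t ^ z.re * Real.exp (-(a ^ 2 * t)) * ‖z‖⁻¹)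
    · filter_upwards [Ioi_mem_atTop (0:ℝ)] with t (ht : (0:ℝ) < t)
      have hb : 0 ≤ a * Real.sqrt t := by positivity
      have hsq : (a * Real.sqrt t) ^ 2 = a ^ 2 * t := by rw [mul_pow, Real.sq_sqrt ht.le]
      rw [hF, norm_mul, norm_div, Complex.norm_real, Real.norm_eq_abs,
        abs_of_nonneg (erfc_nonneg _), norm_ofReal_cpow ht]
      calc erfc (a * Real.sqrt t) * (t ^ z.re / ‖z‖)
          ≤ Real.exp (-(a ^ 2 * t)) * (t ^ z.re / ‖z‖) := by
            apply mul_le_mul_of_nonneg_right _ (by positivity)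
            calc erfc (a * Real.sqrt t) ≤ Real.exp (-(a * Real.sqrt t) ^ 2) := erfc_le hb
              _ = Real.exp (-(a ^ 2 * t)) := by rw [hsq]
        _ = t ^ z.re * Real.exp (-(a ^ 2 * t)) * ‖z‖⁻¹ := by ring
    · have := tendsto_rpow_mul_exp_neg_mul_atTop_nhds_zero z.re (a ^ 2) (by positivity)
      simpa using this.mul_const ‖z‖⁻¹
  -- FTC
  have hFTC : ∫ t in Ioi (0:ℝ), (F'1 t + F'2 t) = 0 - F 0 :=
    integral_Ioi_of_hasDerivAt_of_tendsto hcont hderiv (hIF'1.add hIF'2) htop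
  rw [hF0, sub_zero] at hFTC
  rw [integral_add hIF'1 hIF'2] at hFTC
  have h1 : ∫ t in Ioi (0:ℝ), F'1 t = c * ∫ t in Ioi (0:ℝ), G t := by
    rw [setIntegral_congr_fun measurableSet_Ioi hF1G, integral_const_mul]
  have h2 : ∫ t in Ioi (0:ℝ), F'2 t = -(c * ∫ t in Ioi (0:ℝ), G t) := by
    rw [← h1]; linear_combination hFTC
  rw [h2, hc]
  push_cast
  ring

lemma G_integral {a : ℝ} (ha : 0 < a) {z : ℂ} (hz : 0 < z.re) :
    ∫ t in Ioi (0:ℝ), (t : ℂ) ^ (z + 1/2 - 1) * Complex.exp (-((a ^ 2 * t : ℝ) : ℂ))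
      = (1 / ((a ^ 2 : ℝ) : ℂ)) ^ (z + 1/2) * Complex.Gamma (z + 1/2) := by
  have hw' : 0 < (z + 1/2).re := by simp [Complex.add_re]; linarith
  have h := Complex.integral_cpow_mul_exp_neg_mul_Ioi (a := z + 1/2) (r := a ^ 2) hw'
    (by positivity)
  rw [← h]
  refine setIntegral_congr_fun measurableSet_Ioi fun t ht => ?_
  push_cast
  ring_nf

lemma cpow_alg {a : ℝ} (ha : 0 < a) (z : ℂ) :
    (a : ℂ) * (1 / ((a ^ 2 : ℝ) : ℂ)) ^ (z + 1/2) = (a : ℂ) ^ (-(2 * z)) := by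
  have hA : (a : ℂ) ≠ 0 := Complex.ofReal_ne_zero.mpr ha.ne'
  have hAinv : ((a⁻¹ : ℝ) : ℂ) ≠ 0 := Complex.ofReal_ne_zero.mpr (by positivity)
  have h1 : (1 / ((a ^ 2 : ℝ) : ℂ)) = ((a⁻¹ : ℝ) : ℂ) * ((a⁻¹ : ℝ) : ℂ) := by
    push_cast
    field_simp
  have harg : Complex.arg (a : ℂ) ≠ π := by
    rw [Complex.arg_ofReal_of_nonneg ha.le]
    exact Ne.symm Real.pi_ne_zero
  rw [h1, Complex.mul_cpow_ofReal_nonneg (by positivity) (by positivity),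
    ← Complex.cpow_add _ _ hAinv, show z + 1/2 + (z + 1/2) = 2 * z + 1 by ring,
    Complex.cpow_add _ _ hAinv, Complex.cpow_one, Complex.ofReal_inv,
    Complex.inv_cpow _ _ harg, ← Complex.cpow_neg]
  field_simp

lemma erfc_mellin {a : ℝ} (ha : 0 < a) {z : ℂ} (hz : 0 < z.re) :
    ∫ t in Ioi (0:ℝ), ((erfc (a * Real.sqrt t) : ℝ) : ℂ) * (t : ℂ) ^ (z - 1)
      = Complex.Gamma (z + 1/2) / (z * (Real.sqrt π : ℂ)) * (a : ℂ) ^ (-(2 * z)) := by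
  have hz0 : z ≠ 0 := fun h => by rw [h] at hz; simp at hz
  have hπ : (Real.sqrt π : ℂ) ≠ 0 :=
    Complex.ofReal_ne_zero.mpr (Real.sqrt_pos.mpr Real.pi_pos).ne'
  rw [key_integral ha hz, G_integral ha hz, ← cpow_alg ha z]
  push_cast
  field_simp

/-- For every nonzero real `λ` and every complex `z` with `Re z > 0`, the integral
`∫₀^∞ (−(sgn(λ)/2)·erfc(|λ|·√t))·t^{z−1} dt` converges and equals
`−(Γ(z+1/2)/(2z·√π))·sgn(λ)·|λ|^{−2z}`. -/
theorem stmt_3 (lam : ℝ) (hlam : lam ≠ 0) (z : ℂ) (hz : 0 < z.re) :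
    IntegrableOn
      (fun t : ℝ => ((-(Real.sign lam / 2) * erfc (|lam| * Real.sqrt t) : ℝ) : ℂ)
        * (t : ℂ) ^ (z - 1)) (Ioi 0) volume ∧
    ∫ t in Ioi (0 : ℝ),
        ((-(Real.sign lam / 2) * erfc (|lam| * Real.sqrt t) : ℝ) : ℂ) * (t : ℂ) ^ (z - 1)
      = -(Complex.Gamma (z + 1/2) / (2 * z * Real.sqrt π))
          * (Real.sign lam : ℂ) * ((|lam| : ℝ) : ℂ) ^ (-(2 * z)) := by
  have ha : 0 < |lam| := abs_pos.mpr hlam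
  have hz0 : z ≠ 0 := fun h => by rw [h] at hz; simp at hz
  have hπ : (Real.sqrt π : ℂ) ≠ 0 :=
    Complex.ofReal_ne_zero.mpr (Real.sqrt_pos.mpr Real.pi_pos).ne'
  have hfun : ∀ t : ℝ,
      ((-(Real.sign lam / 2) * erfc (|lam| * Real.sqrt t) : ℝ) : ℂ) * (t : ℂ) ^ (z - 1)
      = ((-(Real.sign lam / 2) : ℝ) : ℂ)
        * (((erfc (|lam| * Real.sqrt t) : ℝ) : ℂ) * (t : ℂ) ^ (z - 1)) := by
    intro t; push_cast; ring
  constructor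
  · exact IntegrableOn.congr_fun
      ((I1 ha hz).const_mul ((-(Real.sign lam / 2) : ℝ) : ℂ))
      (fun t _ => (hfun t).symm) measurableSet_Ioi
  · rw [show (fun t : ℝ =>
        ((-(Real.sign lam / 2) * erfc (|lam| * Real.sqrt t) : ℝ) : ℂ) * (t : ℂ) ^ (z - 1))
        = fun t : ℝ => ((-(Real.sign lam / 2) : ℝ) : ℂ)
          * (((erfc (|lam| * Real.sqrt t) : ℝ) : ℂ) * (t : ℂ) ^ (z - 1)) from funext hfun,
      integral_const_mul, erfc_mellin ha hz]
    push_cast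
    field_simp
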